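/- arXiv:1909.08226 — 9 statements merged into one kernel-verified Lean document; each statement's English description precedes it below -/
import Mathlib

section
/- Let φ ∈ (0,1) and ω = e^{2πiφ}. Then the complex number μ = ω((1 − 2ω + ω²) − i(1 − ω + ω²))/(1 − 2ω + 2ω²) satisfies |μ| = 1. (This is the square λ² of the eigenvalues of the Wojcik model in the case β = iα, showing that they lie on the unit circle S¹.) -/
open Complex

/-- For `φ ∈ (0,1)` and `ω = e^{2πiφ}`, the squared eigenvalue of the Wojcik
model in the case `β = iα` lies on the unit circle. -/
theorem stmt_2 (φ : ℝ) (hφ : φ ∈ Set.Ioo (0 : ℝ) 1)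
    (ω : ℂ) (hω : ω = Complex.exp (2 * Real.pi * Complex.I * (φ : ℂ)))
    (μ : ℂ)
    (hμ : μ = ω * ((1 - 2 * ω + ω ^ 2) - Complex.I * (1 - ω + ω ^ 2)) /
      (1 - 2 * ω + 2 * ω ^ 2)) :
    ‖μ‖ = 1 := by
  have hω1 : ‖ω‖ = 1 := by
    rw [hω, Complex.norm_exp]
    simp [Complex.mul_re, Complex.mul_im]
  have h1 : ω.re ^ 2 + ω.im ^ 2 = 1 := by
    have h := Complex.sq_norm ω
    rw [hω1] at h
    rw [Complex.normSq_apply] at h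
    nlinarith [h]
  have hsq : ω ^ 2 = ω * ω := sq ω
  set x := ω.re with hx
  set y := ω.im with hy
  have hnum : Complex.normSq ((1 - 2 * ω + ω ^ 2) - Complex.I * (1 - ω + ω ^ 2))
      = Complex.normSq (1 - 2 * ω + 2 * ω ^ 2) := by
    rw [hsq]
    simp only [Complex.normSq_apply, Complex.sub_re, Complex.sub_im, Complex.add_re,
      Complex.add_im, Complex.mul_re, Complex.mul_im, Complex.one_re, Complex.one_im,
      Complex.I_re, Complex.I_im, Complex.re_ofNat, Complex.im_ofNat]
    push_cast
    linear_combination (-2 * x ^ 2 + 2 * x - 2 * y ^ 2 - 2 * y - 1) * h1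
  have hden : Complex.normSq (1 - 2 * ω + 2 * ω ^ 2) ≠ 0 := by
    rw [hsq]
    simp only [Complex.normSq_apply, Complex.sub_re, Complex.sub_im, Complex.add_re,
      Complex.add_im, Complex.mul_re, Complex.mul_im, Complex.one_re, Complex.one_im,
      Complex.re_ofNat, Complex.im_ofNat]
    push_cast
    intro hc
    nlinarith [sq_nonneg (x - 1), sq_nonneg (x + 1), sq_nonneg y, sq_nonneg (2*x - 1),
      sq_nonneg (4*x^2 - 2*x - 1), sq_nonneg (y * (2*x - 1)), h1]
  have hden' : (1 - 2 * ω + 2 * ω ^ 2) ≠ 0 := by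
    intro hc
    apply hden
    rw [hc]; simp
  have habs : ‖(1 - 2 * ω + ω ^ 2) - Complex.I * (1 - ω + ω ^ 2)‖
      = ‖1 - 2 * ω + 2 * ω ^ 2‖ := by
    rw [Complex.norm_def, Complex.norm_def, hnum]
  rw [hμ, norm_div, norm_mul, hω1, one_mul, habs, div_self]
  intro hc
  exact hden' ((norm_eq_zero).mp hc)
end

section
/- Let φ ∈ (0,1) and ω = e^{2πiφ}. Then the complex number μ = ω((1 − 2ω + ω²) + i(1 − ω + ω²))/(1 − 2ω + 2ω²) satisfies |μ| = 1. (This is the square λ² of the eigenvalues of the Wojcik model in the case β = −iα, showing that they lie on the unit circle S¹.) -/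
open Complex

/-- For `φ ∈ (0,1)` and `ω = e^{2πiφ}`, the squared eigenvalue of the Wojcik
model in the case `β = -iα` lies on the unit circle. -/
theorem stmt_3 (φ : ℝ) (hφ : φ ∈ Set.Ioo (0 : ℝ) 1)
    (ω : ℂ) (hω : ω = Complex.exp (2 * Real.pi * Complex.I * (φ : ℂ)))
    (μ : ℂ)
    (hμ : μ = ω * ((1 - 2 * ω + ω ^ 2) + Complex.I * (1 - ω + ω ^ 2)) /
      (1 - 2 * ω + 2 * ω ^ 2)) :
    ‖μ‖ = 1 := by
  have hab : ‖ω‖ = 1 := by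
    rw [hω, Complex.norm_exp]
    simp [Complex.mul_re]
  set c : ℂ := (starRingEnd ℂ) ω with hcdef
  have hc : ω * c = 1 := by
    rw [hcdef, Complex.mul_conj]
    norm_cast
    rw [← Complex.sq_norm, hab]; norm_num
  -- Denominator is nonzero
  have hD : (1 - 2 * ω + 2 * ω ^ 2) ≠ 0 := by
    intro h
    have hfac : (2 * ω - (1 + Complex.I)) * (2 * ω - (1 - Complex.I)) = 0 := by
      have hI : Complex.I ^ 2 = -1 := Complex.I_sq
      linear_combination 2 * h - hI
    have hns : Complex.normSq ω = 1 := by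
      rw [← Complex.sq_norm, hab]; norm_num
    rcases mul_eq_zero.mp hfac with h1 | h1
    · have hω' : ω = (1 + Complex.I) / 2 := by
        linear_combination h1 / 2
      rw [hω'] at hns
      simp [Complex.normSq_apply, Complex.div_re, Complex.div_im, Complex.normSq] at hns
      norm_num at hns
    · have hω' : ω = (1 - Complex.I) / 2 := by
        linear_combination h1 / 2
      rw [hω'] at hns
      simp [Complex.normSq_apply, Complex.div_re, Complex.div_im, Complex.normSq] at hns
      norm_num at hns
  -- |numerator inner| = |denominator|
  have key : ((1 - 2 * ω + ω ^ 2) + Complex.I * (1 - ω + ω ^ 2)) *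
      ((1 - 2 * c + c ^ 2) - Complex.I * (1 - c + c ^ 2)) =
      (1 - 2 * ω + 2 * ω ^ 2) * (1 - 2 * c + 2 * c ^ 2) := by
    have hI : Complex.I ^ 2 = -1 := Complex.I_sq
    linear_combination (-2 * ω * c + (1 - Complex.I) * ω + (1 + Complex.I) * c - 1) * hc
      + (- (1 - ω + ω ^ 2) * (1 - c + c ^ 2)) * hI
  have hconjN : (starRingEnd ℂ) ((1 - 2 * ω + ω ^ 2) + Complex.I * (1 - ω + ω ^ 2)) =
      ((1 - 2 * c + c ^ 2) - Complex.I * (1 - c + c ^ 2)) := by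
    simp [hcdef, map_sub, map_add, map_mul, map_pow, map_ofNat, Complex.conj_I]
    ring
  have hconjD : (starRingEnd ℂ) (1 - 2 * ω + 2 * ω ^ 2) = (1 - 2 * c + 2 * c ^ 2) := by
    simp [hcdef, map_sub, map_add, map_mul, map_pow, map_ofNat]
  have habs : ‖(1 - 2 * ω + ω ^ 2) + Complex.I * (1 - ω + ω ^ 2)‖ =
      ‖1 - 2 * ω + 2 * ω ^ 2‖ := by
    have h1 : (Complex.normSq ((1 - 2 * ω + ω ^ 2) + Complex.I * (1 - ω + ω ^ 2)) : ℂ)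
        = (Complex.normSq (1 - 2 * ω + 2 * ω ^ 2) : ℂ) := by
      rw [← Complex.mul_conj, ← Complex.mul_conj, hconjN, hconjD, key]
    have h2 := Complex.ofReal_injective h1
    have := congrArg Real.sqrt h2
    rwa [← Complex.norm_def, ← Complex.norm_def] at this
  rw [hμ, norm_div, norm_mul, hab, habs, one_mul, div_self]
  exact norm_ne_zero_iff.mpr hD
end

section
/- Let φ ∈ (1/4, 1) and ω = e^{2πiφ}. Then μ = ω((1 − 2ω + ω²) − i(1 − ω + ω²))/(1 − 2ω + 2ω²) satisfies Re(μ) < 0. Consequently every λ ∈ ℂ with λ² = μ satisfies |λ| = 1 and |Im λ| > 1/√2; that is, the eigenvalues λ^(1)(φ) and λ^(2)(φ) of the Wojcik model (case β = iα) do not lie on the continuous spectrum σ(H) of the Hadamard walk. -/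
open Complex

set_option maxHeartbeats 1000000 in
/-- For `φ ∈ (1/4, 1)`, the squared eigenvalue `μ` of the Wojcik model
(case `β = iα`) has negative real part; consequently every square root `λ`
of `μ` has `|λ| = 1` and `|Im λ| > 1/√2`, i.e. the eigenvalues do not lie on
the continuous spectrum `σ(H)` of the Hadamard walk. -/
theorem stmt_5 (φ : ℝ) (hφ : φ ∈ Set.Ioo (1 / 4 : ℝ) 1)
    (ω : ℂ) (hω : ω = Complex.exp (2 * Real.pi * Complex.I * (φ : ℂ)))
    (μ : ℂ)
    (hμ : μ = ω * ((1 - 2 * ω + ω ^ 2) - Complex.I * (1 - ω + ω ^ 2)) /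
      (1 - 2 * ω + 2 * ω ^ 2)) :
    μ.re < 0 ∧ ∀ l : ℂ, l ^ 2 = μ →
      ‖l‖ = 1 ∧ |l.im| > 1 / Real.sqrt 2 := by
  obtain ⟨hφ1, hφ2⟩ := hφ
  have hπ := Real.pi_gt_three
  set θ : ℝ := 2 * Real.pi * φ with hθdef
  set c : ℝ := Real.cos θ with hcdef
  set s : ℝ := Real.sin θ with hsdef
  have hθ1 : Real.pi / 2 < θ := by
    have h := mul_pos Real.pi_pos (show (0:ℝ) < 4*φ - 1 by linarith)
    rw [hθdef]; nlinarith
  have hθ2 : θ < 2 * Real.pi := by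
    have h := mul_pos Real.pi_pos (show (0:ℝ) < 1 - φ by linarith)
    rw [hθdef]; nlinarith
  have hcs : c ^ 2 + s ^ 2 = 1 := by
    rw [hcdef, hsdef]; rw [add_comm]; exact Real.sin_sq_add_cos_sq θ
  -- ω = c + s I
  have hω' : ω = (c : ℂ) + (s : ℂ) * Complex.I := by
    rw [hω]
    have : (2 : ℂ) * Real.pi * Complex.I * (φ : ℂ) = ((θ : ℝ) : ℂ) * Complex.I := by
      push_cast [hθdef]; ring
    rw [this, Complex.exp_mul_I]
    norm_cast
  have hc1 : c < 1 := by
    rcases lt_or_eq_of_le (Real.cos_le_one θ) with h | h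
    · exact h
    · exfalso
      have := (Real.cos_eq_one_iff_of_lt_of_lt (by nlinarith) hθ2).1 h
      nlinarith
  have hs1 : s < 1 := by
    rcases lt_or_eq_of_le (Real.sin_le_one θ) with h | h
    · exact h
    · exfalso
      have hcos : Real.cos (Real.pi / 2 - θ) = 1 := by
        rw [Real.cos_pi_div_two_sub]; exact h
      have := (Real.cos_eq_one_iff_of_lt_of_lt
        (by nlinarith) (by nlinarith)).1 hcos
      nlinarith
  have hcm : -1 ≤ c := Real.neg_one_le_cos θ
  have hsm : -1 ≤ s := Real.neg_one_le_sin θ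
  -- components of numerator and denominator
  have hNre : (ω * ((1 - 2 * ω + ω ^ 2) - Complex.I * (1 - ω + ω ^ 2))).re =
      s + 2*s^2 - s^3 + c - 2*c*s - 3*c*s^2 - 2*c^2 + 3*c^2*s + c^3 := by
    rw [hω']; simp [pow_two, Complex.mul_re, Complex.mul_im]; ring
  have hNim : (ω * ((1 - 2 * ω + ω ^ 2) - Complex.I * (1 - ω + ω ^ 2))).im =
      s - s^2 - s^3 - c - 4*c*s + 3*c*s^2 + c^2 + 3*c^2*s - c^3 := by
    rw [hω']; simp [pow_two, Complex.mul_re, Complex.mul_im]; ring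
  have hDre : (1 - 2 * ω + 2 * ω ^ 2).re = 1 - 2*c + 2*c^2 - 2*s^2 := by
    rw [hω']; simp [pow_two, Complex.mul_re, Complex.mul_im]; ring
  have hDim : (1 - 2 * ω + 2 * ω ^ 2).im = -2*s + 4*c*s := by
    rw [hω']; simp [pow_two, Complex.mul_re, Complex.mul_im]; ring
  -- normSq of denominator
  have hnsD : Complex.normSq (1 - 2 * ω + 2 * ω ^ 2) = 5 - 12*c + 8*c^2 := by
    rw [Complex.normSq_apply, hDre, hDim]
    linear_combination (4 + 4*s^2 - 8*c + 4*c^2) * hcs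
  have hnsDpos : 0 < Complex.normSq (1 - 2 * ω + 2 * ω ^ 2) := by
    rw [hnsD]; nlinarith [sq_nonneg (4*c - 3)]
  -- the raw real-part numerator
  set E : ℝ := (s + 2*s^2 - s^3 + c - 2*c*s - 3*c*s^2 - 2*c^2 + 3*c^2*s + c^3) *
      (1 - 2*c + 2*c^2 - 2*s^2) +
      (s - s^2 - s^3 - c - 4*c*s + 3*c*s^2 + c^2 + 3*c^2*s - c^3) * (-2*s + 4*c*s)
      with hEdef
  have key : E * (6 - 4*c - 4*s) = -(4 * (1 - c) * (1 - s) * (8*c^2 - 12*c + 5)) := by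
    rw [hEdef]
    linear_combination (- 20 + 14*s - 16*s^2 + 20*s^3 - 8*s^4 + 62*c - 48*c*s
      + 36*c*s^2 - 16*c*s^3 - 72*c^2 + 52*c^2*s - 16*c^2*s^2 + 36*c^3
      - 16*c^3*s - 8*c^4) * hcs
  have h6 : 0 < 6 - 4*c - 4*s := by nlinarith [sq_nonneg (c - s), sq_nonneg (c + s)]
  have hquad : 0 < 8*c^2 - 12*c + 5 := by nlinarith [sq_nonneg (4*c - 3)]
  have hrhs : 0 < 4 * (1 - c) * (1 - s) * (8*c^2 - 12*c + 5) := by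
    have h1 : 0 < 4 * (1 - c) := by linarith
    have h2 : 0 < 1 - s := by linarith
    positivity
  have hE : E < 0 := by
    by_contra h
    push_neg at h
    nlinarith [mul_nonneg h h6.le]
  have h5 : (0:ℝ) < 5 - 12*c + 8*c^2 := by nlinarith [sq_nonneg (4*c - 3)]
  have hμre : μ.re < 0 := by
    have hform : μ.re = E / (5 - 12*c + 8*c^2) := by
      rw [hμ, Complex.div_re, hNre, hNim, hDre, hDim, hnsD, hEdef]
      ring
    rw [hform]
    exact div_neg_of_neg_of_pos hE h5
  -- |μ| = 1
  have hnsN : Complex.normSq (ω * ((1 - 2 * ω + ω ^ 2) - Complex.I * (1 - ω + ω ^ 2)))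
      = 5 - 12*c + 8*c^2 := by
    rw [Complex.normSq_apply, hNre, hNim]
    linear_combination (1 - s^2 - 2*s^3 + 2*s^4 - 4*c - 6*c*s^2 + 7*c^2 - 2*c^2*s
      + 4*c^2*s^2 - 6*c^3 + 2*c^4 + (4 + 4*s^2 - 8*c + 4*c^2)) * hcs
  have hμns : Complex.normSq μ = 1 := by
    rw [hμ, Complex.normSq_div, hnsN, ← hnsD]
    exact div_self (ne_of_gt hnsDpos)
  refine ⟨hμre, fun l hl => ?_⟩
  have habsμ : ‖μ‖ = 1 := by
    rw [Complex.norm_def, hμns, Real.sqrt_one]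
  have h0 := norm_nonneg l
  have habs : ‖l‖ = 1 := by
    have h1 : (‖l‖) ^ 2 = 1 := by
      rw [← habsμ, ← hl, norm_pow]
    rw [← Real.sqrt_sq h0, h1, Real.sqrt_one]
  have hnl : l.re ^ 2 + l.im ^ 2 = 1 := by
    have := Complex.sq_norm l
    rw [habs, Complex.normSq_apply] at this
    nlinarith [this]
  have hre2 : l.re ^ 2 - l.im ^ 2 < 0 := by
    have h2 : (l ^ 2).re = l.re ^ 2 - l.im ^ 2 := by
      simp [pow_two, Complex.mul_re]
    rw [hl] at h2
    linarith [hμre, h2 ▸ hμre]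
  have him2 : 1 / 2 < l.im ^ 2 := by linarith
  refine ⟨habs, ?_⟩
  have heq : 1 / Real.sqrt 2 = Real.sqrt (1/2) := by
    rw [one_div, ← Real.sqrt_inv]; norm_num
  rw [gt_iff_lt, heq, ← Real.sqrt_sq_eq_abs]
  exact Real.sqrt_lt_sqrt (by norm_num) him2
end

section
/- Let φ ∈ (0, 3/4) and ω = e^{2πiφ}. Then μ = ω((1 − 2ω + ω²) + i(1 − ω + ω²))/(1 − 2ω + 2ω²) satisfies Re(μ) < 0. Consequently every λ ∈ ℂ with λ² = μ satisfies |λ| = 1 and |Im λ| > 1/√2; that is, the eigenvalues λ^(3)(φ) and λ^(4)(φ) of the Wojcik model (case β = −iα) do not lie on the continuous spectrum σ(H) of the Hadamard walk. -/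
open Complex

set_option maxHeartbeats 1000000 in
/-- For `φ ∈ (0, 3/4)`, the squared eigenvalue `μ` of the Wojcik model
(case `β = -iα`) has negative real part; consequently every square root `λ`
of `μ` has `|λ| = 1` and `|Im λ| > 1/√2`, i.e. the eigenvalues do not lie on
the continuous spectrum `σ(H)` of the Hadamard walk. -/
theorem stmt_6 (φ : ℝ) (hφ : φ ∈ Set.Ioo (0 : ℝ) (3 / 4))
    (ω : ℂ) (hω : ω = Complex.exp (2 * Real.pi * Complex.I * (φ : ℂ)))
    (μ : ℂ)
    (hμ : μ = ω * ((1 - 2 * ω + ω ^ 2) + Complex.I * (1 - ω + ω ^ 2)) /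
      (1 - 2 * ω + 2 * ω ^ 2)) :
    μ.re < 0 ∧ ∀ l : ℂ, l ^ 2 = μ →
      ‖l‖ = 1 ∧ |l.im| > 1 / Real.sqrt 2 := by
  obtain ⟨hφ0, hφ34⟩ := hφ
  have hπ := Real.pi_pos
  set θ : ℝ := 2 * Real.pi * φ with hθdef
  have hθ0 : 0 < θ := by positivity
  have hθ32 : θ < 3 * Real.pi / 2 := by
    have : 2 * Real.pi * φ < 2 * Real.pi * (3/4) := by nlinarith
    linarith [this]
  set c : ℝ := Real.cos θ with hcdef
  set s : ℝ := Real.sin θ with hsdef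
  have hcs : c ^ 2 + s ^ 2 = 1 := by
    rw [hcdef, hsdef]; rw [add_comm]; exact Real.sin_sq_add_cos_sq θ
  -- c < 1
  have hc1 : c < 1 := by
    rcases lt_or_eq_of_le (Real.cos_le_one θ) with h | h
    · exact h
    · exfalso
      have h0 : θ = 0 := by
        have := (Real.cos_eq_one_iff_of_lt_of_lt
          (by linarith : -(2 * Real.pi) < θ) (by linarith : θ < 2 * Real.pi)).mp h
        exact this
      linarith
  -- s > -1
  have hs1 : -1 < s := by
    rcases lt_or_eq_of_le (Real.neg_one_le_sin θ) with h | h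
    · exact h
    · exfalso
      obtain ⟨k, hk⟩ := Real.sin_eq_neg_one_iff.mp h.symm
      have hk0 : (0:ℝ) < (k:ℝ) := by nlinarith
      have hk1 : (k:ℝ) < 1 := by nlinarith
      have : (0:ℤ) < k := by exact_mod_cast hk0
      have : (1:ℝ) ≤ (k:ℝ) := by exact_mod_cast this
      linarith
  -- ω = c + s I
  have hωeq : ω = (c : ℂ) + (s : ℂ) * I := by
    have h1 : (2 * (Real.pi:ℂ) * I * (φ:ℂ)) = (θ : ℂ) * I := by
      rw [hθdef]; push_cast; ring
    rw [hω, h1, Complex.exp_mul_I, ← Complex.ofReal_cos, ← Complex.ofReal_sin]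
  have hre : ω.re = c := by rw [hωeq]; simp
  have him : ω.im = s := by rw [hωeq]; simp
  have hcsC : (c : ℂ) ^ 2 + (s : ℂ) ^ 2 = 1 := by exact_mod_cast hcs
  have hω0 : ω ≠ 0 := by rw [hω]; exact Complex.exp_ne_zero _
  have h2c : 2 * (c : ℂ) * ω = 1 + ω ^ 2 := by
    rw [hωeq]; linear_combination hcsC - (s:ℂ)^2 * Complex.I_sq
  -- factorizations
  set A : ℂ := ((2*c-2 : ℝ) : ℂ) + ((2*c-1 : ℝ) : ℂ) * I with hAdef
  set B : ℂ := ((2*c-2 : ℝ) : ℂ) + ω with hBdef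
  have hN : ω * ((1 - 2 * ω + ω ^ 2) + Complex.I * (1 - ω + ω ^ 2)) = ω ^ 2 * A := by
    rw [hAdef]; push_cast
    linear_combination (-(ω) - ω * I) * h2c
  have hD : 1 - 2 * ω + 2 * ω ^ 2 = ω * B := by
    rw [hBdef]; push_cast
    linear_combination (-1 : ℂ) * h2c
  have hBnorm : Complex.normSq B = 8*c^2 - 12*c + 5 := by
    rw [Complex.normSq_apply]
    simp only [hBdef, Complex.add_re, Complex.add_im, Complex.ofReal_re, Complex.ofReal_im,
      hre, him]
    linear_combination hcs
  have hK : (0:ℝ) < 8*c^2 - 12*c + 5 := by nlinarith [sq_nonneg (4*c - 3)]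
  have hB0 : B ≠ 0 := by
    intro h
    rw [h, Complex.normSq_zero] at hBnorm
    linarith
  have hμ' : μ = ω * A / B := by
    rw [hμ, hN, hD]
    field_simp
  -- positivity facts
  have h32 : 0 < 3 - 2*c - 2*s := by nlinarith [sq_nonneg (c - s)]
  have hωAre : (ω * A).re = c*(2*c-2) - s*(2*c-1) := by
    rw [Complex.mul_re]
    simp only [hAdef, Complex.add_re, Complex.add_im, Complex.ofReal_re, Complex.ofReal_im,
      Complex.mul_re, Complex.mul_im, Complex.I_re, Complex.I_im, hre, him]
    ring
  have hωAim : (ω * A).im = c*(2*c-1) + s*(2*c-2) := by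
    rw [Complex.mul_im]
    simp only [hAdef, Complex.add_re, Complex.add_im, Complex.ofReal_re, Complex.ofReal_im,
      Complex.mul_re, Complex.mul_im, Complex.I_re, Complex.I_im, hre, him]
    ring
  have hBre : B.re = 3*c - 2 := by
    simp only [hBdef, Complex.add_re, Complex.ofReal_re, hre]; ring
  have hBim : B.im = s := by
    simp only [hBdef, Complex.add_im, Complex.ofReal_im, him]; ring
  have hμre : μ.re = (2*(c-1)*((1+s)*(3-2*c-2*s))) / (8*c^2 - 12*c + 5) := by
    rw [hμ', Complex.div_re, hBnorm, hωAre, hωAim, hBre, hBim, ← add_div]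
    congr 1
    linear_combination (6*c - 6) * hcs
  have hμreneg : μ.re < 0 := by
    rw [hμre]
    apply div_neg_of_neg_of_pos _ hK
    have : 0 < (1+s)*(3-2*c-2*s) := mul_pos (by linarith) h32
    nlinarith
  refine ⟨hμreneg, fun l hl => ?_⟩
  -- |μ| = 1
  have hμnorm : Complex.normSq μ = 1 := by
    rw [hμ', Complex.normSq_div, Complex.normSq_mul, hBnorm, Complex.normSq_apply,
      Complex.normSq_apply, hre, him]
    simp only [hAdef, Complex.add_re, Complex.add_im, Complex.ofReal_re, Complex.ofReal_im,
      Complex.mul_re, Complex.mul_im, Complex.I_re, Complex.I_im]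
    rw [div_eq_one_iff_eq (by linarith)]
    linear_combination (8*c^2 - 12*c + 5) * hcs
  have habsμ : ‖μ‖ = 1 := by
    rw [Complex.norm_def, hμnorm, Real.sqrt_one]
  have habsl : ‖l‖ = 1 := by
    have h1 : (‖l‖)^2 = 1 := by rw [← norm_pow, hl, habsμ]
    have h2 : (‖l‖ - 1) * (‖l‖ + 1) = 0 := by linear_combination h1
    rcases mul_eq_zero.mp h2 with h | h
    · linarith
    · linarith [norm_nonneg l]
  refine ⟨habsl, ?_⟩
  -- imaginary part
  have hlsq : l.re^2 + l.im^2 = 1 := by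
    have h4 := Complex.sq_norm l
    rw [habsl, Complex.normSq_apply] at h4
    linear_combination -h4
  have hresq : l.re^2 - l.im^2 < 0 := by
    have h5 : μ.re = l.re^2 - l.im^2 := by
      rw [← hl, pow_two, Complex.mul_re]; ring
    linarith
  have him2 : (1:ℝ)/2 < l.im^2 := by nlinarith
  have hs2 : (0:ℝ) < Real.sqrt 2 := by positivity
  rw [gt_iff_lt, div_lt_iff₀ hs2]
  nlinarith [Real.sq_sqrt (by norm_num : (2:ℝ) ≥ 0), abs_nonneg l.im, _root_.sq_abs l.im,
    Real.sqrt_nonneg 2]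
end

section
/- Let ξ ∈ (0, π/4), C = cos ξ, S = sin ξ. Then (√2 − S)/√(3 − 2√2·S) > 1/√2. Consequently each of the four numbers λ = ±(C ± (√2 − S)i)/√(3 − 2√2·S) satisfies |Im λ| > 1/√2, so the eigenvalues of the Hadamard walk with one defect do not lie on the continuous spectrum σ(H) = {z : |z| = 1, |Im z| ≤ 1/√2} of the Hadamard walk. -/
open Real Complex

/-- For `ξ ∈ (0, π/4)`, with `C = cos ξ`, `S = sin ξ`, one has
`(√2 - S)/√(3 - 2√2·S) > 1/√2`; consequently each of the four eigenvalues
`±(C ± (√2 - S)i)/√(3 - 2√2·S)` of the Hadamard walk with one defect has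
`|Im λ| > 1/√2`, so none of them lies on the continuous spectrum
`σ(H) = {z : |z| = 1, |Im z| ≤ 1/√2}` of the Hadamard walk. -/
theorem stmt_8 (ξ : ℝ) (hξ : ξ ∈ Set.Ioo (0 : ℝ) (Real.pi / 4))
    (C S : ℝ) (hC : C = Real.cos ξ) (hS : S = Real.sin ξ) :
    (Real.sqrt 2 - S) / Real.sqrt (3 - 2 * Real.sqrt 2 * S) > 1 / Real.sqrt 2 ∧
      ∀ ε₁ ε₂ : ℝ, (ε₁ = 1 ∨ ε₁ = -1) → (ε₂ = 1 ∨ ε₂ = -1) →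
        |(((ε₁ : ℂ) * (((C : ℂ) + ((ε₂ : ℂ) * ((Real.sqrt 2 - S : ℝ) : ℂ)) * Complex.I) /
          ((Real.sqrt (3 - 2 * Real.sqrt 2 * S) : ℝ) : ℂ))).im)| > 1 / Real.sqrt 2 := by
  obtain ⟨h0, h4⟩ := hξ
  have hpi := Real.pi_pos
  have hsq2 : Real.sqrt 2 ^ 2 = 2 := Real.sq_sqrt (by norm_num)
  have hs2pos : 0 < Real.sqrt 2 := Real.sqrt_pos.mpr (by norm_num)
  have hS0 : 0 < S := by
    rw [hS]; exact Real.sin_pos_of_pos_of_lt_pi h0 (by linarith)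
  have hS1 : S < Real.sqrt 2 / 2 := by
    rw [hS, ← Real.sin_pi_div_four]
    apply Real.strictMonoOn_sin ⟨by linarith, by linarith⟩ ⟨by linarith, by linarith⟩ h4
  have hlt : Real.sqrt 2 * S < 1 := by nlinarith
  have hD : 0 < 3 - 2 * Real.sqrt 2 * S := by nlinarith
  have hDs : 0 < Real.sqrt (3 - 2 * Real.sqrt 2 * S) := Real.sqrt_pos.mpr hD
  have hA : 0 < Real.sqrt 2 - S := by nlinarith
  have key : 1 / Real.sqrt 2 <
      (Real.sqrt 2 - S) / Real.sqrt (3 - 2 * Real.sqrt 2 * S) := by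
    rw [div_lt_div_iff₀ hs2pos hDs]
    have h1 : Real.sqrt (3 - 2 * Real.sqrt 2 * S) <
        (Real.sqrt 2 - S) * Real.sqrt 2 := by
      have h2 : Real.sqrt (3 - 2 * Real.sqrt 2 * S) <
          Real.sqrt (((Real.sqrt 2 - S) * Real.sqrt 2) ^ 2) := by
        apply Real.sqrt_lt_sqrt hD.le
        nlinarith [sq_nonneg (Real.sqrt 2 * S - 1)]
      rwa [Real.sqrt_sq (by positivity)] at h2
    linarith
  refine ⟨key, ?_⟩
  intro ε₁ ε₂ h1 h2
  have him : ∀ e1 e2 : ℝ,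
      (((e1 : ℂ) * (((C : ℂ) + ((e2 : ℂ) * ((Real.sqrt 2 - S : ℝ) : ℂ)) * Complex.I) /
        ((Real.sqrt (3 - 2 * Real.sqrt 2 * S) : ℝ) : ℂ)))).im
      = e1 * e2 * ((Real.sqrt 2 - S) / Real.sqrt (3 - 2 * Real.sqrt 2 * S)) := by
    intro e1 e2
    have hne : ((Real.sqrt (3 - 2 * Real.sqrt 2 * S) : ℝ) : ℂ) ≠ 0 := by
      exact_mod_cast hDs.ne'
    rw [← mul_div_assoc]
    rw [Complex.div_ofReal_im]
    simp [Complex.mul_im, Complex.add_im, Complex.add_re]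
    ring
  rw [him ε₁ ε₂]
  rcases h1 with rfl | rfl <;> rcases h2 with rfl | rfl <;>
    · simp only [one_mul, mul_one, neg_mul, mul_neg, neg_neg, abs_neg]
      rw [abs_of_pos (by positivity)]
      exact key
end

section
/- Let σ ∈ [0, 5π/4) ∪ (7π/4, 2π]. Then (sin σ + √2)/√(3 + 2√2·sin σ) > 1/√2; consequently the eigenvalues λ^(1)(σ) = (cos σ + (sin σ + √2)i)/√(3 + 2√2·sin σ) and λ^(2)(σ) = −λ^(1)(σ) of the two-phase quantum walk with one defect satisfy |Im λ^(j)(σ)| > 1/√2, so they do not lie on the continuous spectrum σ(H) = {z : |z| = 1, |Im z| ≤ 1/√2} of the Hadamard walk. -/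
open Real Complex

lemma sin_gt_aux (σ : ℝ)
    (hσ : σ ∈ Set.Ico (0 : ℝ) (5 * Real.pi / 4) ∪
      Set.Ioc (7 * Real.pi / 4) (2 * Real.pi)) :
    Real.sin σ > -(Real.sqrt 2 / 2) := by
  have hpi := Real.pi_pos
  rcases hσ with ⟨h0, h1⟩ | ⟨h0, h1⟩
  · by_cases hπ : σ ≤ Real.pi
    · have := Real.sin_nonneg_of_nonneg_of_le_pi h0 hπ
      have h2 : (0:ℝ) < Real.sqrt 2 := by positivity
      linarith
    · push_neg at hπ
      have key : Real.sin (σ - Real.pi) < Real.sin (Real.pi / 4) := by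
        apply Real.sin_lt_sin_of_lt_of_le_pi_div_two (by linarith) (by linarith)
        linarith
      rw [Real.sin_pi_div_four] at key
      have : Real.sin (σ - Real.pi) = -Real.sin σ := by
        rw [Real.sin_sub]; simp
      linarith [this ▸ key]
  · have key : Real.sin (2 * Real.pi - σ) < Real.sin (Real.pi / 4) := by
      apply Real.sin_lt_sin_of_lt_of_le_pi_div_two (by linarith) (by linarith)
      linarith
    rw [Real.sin_pi_div_four] at key
    have : Real.sin (2 * Real.pi - σ) = -Real.sin σ := by
      rw [Real.sin_sub]; simp
    linarith [this ▸ key]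

/-- For `σ ∈ [0, 5π/4) ∪ (7π/4, 2π]`, one has
`(sin σ + √2)/√(3 + 2√2·sin σ) > 1/√2`; hence the eigenvalues
`λ⁽¹⁾(σ) = (cos σ + (sin σ + √2)i)/√(3 + 2√2·sin σ)` and `λ⁽²⁾(σ) = -λ⁽¹⁾(σ)`
of the two-phase quantum walk with one defect satisfy `|Im λ| > 1/√2`, so they
do not lie on the continuous spectrum `σ(H)` of the Hadamard walk. -/
theorem stmt_12 (σ : ℝ)
    (hσ : σ ∈ Set.Ico (0 : ℝ) (5 * Real.pi / 4) ∪
      Set.Ioc (7 * Real.pi / 4) (2 * Real.pi))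
    (l1 : ℂ)
    (hl1 : l1 = ((Real.cos σ : ℂ) + ((Real.sin σ + Real.sqrt 2 : ℝ) : ℂ) * Complex.I) /
      ((Real.sqrt (3 + 2 * Real.sqrt 2 * Real.sin σ) : ℝ) : ℂ)) :
    (Real.sin σ + Real.sqrt 2) / Real.sqrt (3 + 2 * Real.sqrt 2 * Real.sin σ) >
        1 / Real.sqrt 2 ∧
      |l1.im| > 1 / Real.sqrt 2 ∧ |(-l1).im| > 1 / Real.sqrt 2 := by
  have hs := sin_gt_aux σ hσ
  have hsin1 := Real.neg_one_le_sin σ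
  have hsin2 := Real.sin_le_one σ
  have h2 : Real.sqrt 2 ^ 2 = 2 := Real.sq_sqrt (by norm_num)
  have h2pos : (0:ℝ) < Real.sqrt 2 := by positivity
  have h2lt : Real.sqrt 2 < 2 := by nlinarith
  set s := Real.sin σ with hsdef
  have hApos : (0:ℝ) < 3 + 2 * Real.sqrt 2 * s := by nlinarith
  have hAsqrt : (0:ℝ) < Real.sqrt (3 + 2 * Real.sqrt 2 * s) := Real.sqrt_pos.mpr hApos
  have hspos : 0 < s + Real.sqrt 2 := by nlinarith
  have main : (s + Real.sqrt 2) / Real.sqrt (3 + 2 * Real.sqrt 2 * s) > 1 / Real.sqrt 2 := by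
    rw [gt_iff_lt, div_lt_div_iff₀ h2pos hAsqrt, one_mul]
    have : Real.sqrt (3 + 2 * Real.sqrt 2 * s) < (s + Real.sqrt 2) * Real.sqrt 2 := by
      apply (Real.sqrt_lt' (by nlinarith)).mpr
      have hne : Real.sqrt 2 * s + 1 > 0 := by nlinarith
      nlinarith [sq_nonneg (Real.sqrt 2 * s + 1)]
    linarith
  refine ⟨main, ?_, ?_⟩
  · have him : l1.im = (s + Real.sqrt 2) / Real.sqrt (3 + 2 * Real.sqrt 2 * s) := by
      rw [hl1]
      rw [Complex.div_im]
      simp [Complex.normSq_ofReal]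
      rw [div_eq_div_iff (by positivity) (by positivity)]
      ring
    rw [him, abs_of_pos (by positivity)]
    exact main
  · have him : l1.im = (s + Real.sqrt 2) / Real.sqrt (3 + 2 * Real.sqrt 2 * s) := by
      rw [hl1]
      rw [Complex.div_im]
      simp [Complex.normSq_ofReal]
      rw [div_eq_div_iff (by positivity) (by positivity)]
      ring
    rw [Complex.neg_im, abs_neg, him, abs_of_pos (by positivity)]
    exact main
end

section
/- Let σ ∈ [0, π/4) ∪ (3π/4, 2π]. Then (√2 − sin σ)/√(3 − 2√2·sin σ) > 1/√2; consequently the eigenvalues λ^(3)(σ) = −(cos σ + (sin σ − √2)i)/√(3 − 2√2·sin σ) and λ^(4)(σ) = −λ^(3)(σ) of the two-phase quantum walk with one defect satisfy |Im λ^(j)(σ)| > 1/√2, so they do not lie on the continuous spectrum σ(H) = {z : |z| = 1, |Im z| ≤ 1/√2} of the Hadamard walk. -/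
open Real Complex

lemma sin_lt_aux (σ : ℝ)
    (hσ : σ ∈ Set.Ico (0 : ℝ) (Real.pi / 4) ∪
      Set.Ioc (3 * Real.pi / 4) (2 * Real.pi)) :
    Real.sin σ < Real.sqrt 2 / 2 := by
  have hpi := Real.pi_pos
  have h2 : Real.sin (Real.pi / 4) = Real.sqrt 2 / 2 := Real.sin_pi_div_four
  rcases hσ with ⟨h0, h1⟩ | ⟨h0, h1⟩
  · rw [← h2]
    apply Real.strictMonoOn_sin ⟨by linarith, by linarith⟩ ⟨by linarith, by linarith⟩ h1
  · rcases le_or_gt σ Real.pi with hle | hgt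
    · have : Real.sin σ = Real.sin (Real.pi - σ) := (Real.sin_pi_sub σ).symm
      rw [this, ← h2]
      apply Real.strictMonoOn_sin ⟨by linarith, by linarith⟩ ⟨by linarith, by linarith⟩
      linarith
    · have : Real.sin σ = Real.sin (σ - 2 * Real.pi) := by
        rw [Real.sin_sub_two_pi]
      rw [this]
      have hnp : Real.sin (σ - 2 * Real.pi) ≤ 0 :=
        Real.sin_nonpos_of_nonpos_of_neg_pi_le (by linarith) (by linarith)
      have : (0:ℝ) < Real.sqrt 2 / 2 := by positivity
      linarith

/-- For `σ ∈ [0, π/4) ∪ (3π/4, 2π]`, one has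
`(√2 - sin σ)/√(3 - 2√2·sin σ) > 1/√2`; hence the eigenvalues
`λ⁽³⁾(σ) = -(cos σ + (sin σ - √2)i)/√(3 - 2√2·sin σ)` and `λ⁽⁴⁾(σ) = -λ⁽³⁾(σ)`
of the two-phase quantum walk with one defect satisfy `|Im λ| > 1/√2`, so they
do not lie on the continuous spectrum `σ(H)` of the Hadamard walk. -/
theorem stmt_13 (σ : ℝ)
    (hσ : σ ∈ Set.Ico (0 : ℝ) (Real.pi / 4) ∪
      Set.Ioc (3 * Real.pi / 4) (2 * Real.pi))
    (l3 : ℂ)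
    (hl3 : l3 = -(((Real.cos σ : ℂ) + ((Real.sin σ - Real.sqrt 2 : ℝ) : ℂ) * Complex.I) /
      ((Real.sqrt (3 - 2 * Real.sqrt 2 * Real.sin σ) : ℝ) : ℂ))) :
    (Real.sqrt 2 - Real.sin σ) / Real.sqrt (3 - 2 * Real.sqrt 2 * Real.sin σ) >
        1 / Real.sqrt 2 ∧
      |l3.im| > 1 / Real.sqrt 2 ∧ |(-l3).im| > 1 / Real.sqrt 2 := by
  have hs := sin_lt_aux σ hσ
  have hsge : -1 ≤ Real.sin σ := Real.neg_one_le_sin σ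
  have h2 : Real.sqrt 2 ^ 2 = 2 := Real.sq_sqrt (by norm_num)
  have h2pos : (0:ℝ) < Real.sqrt 2 := Real.sqrt_pos.mpr (by norm_num)
  set s := Real.sin σ with hsdef
  have harg : (0:ℝ) < 3 - 2 * Real.sqrt 2 * s := by nlinarith
  set D := Real.sqrt (3 - 2 * Real.sqrt 2 * s) with hD
  have hDpos : 0 < D := Real.sqrt_pos.mpr harg
  have hDsq : D ^ 2 = 3 - 2 * Real.sqrt 2 * s := Real.sq_sqrt harg.le
  have hkey : (Real.sqrt 2 - s) / D > 1 / Real.sqrt 2 := by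
    rw [gt_iff_lt, div_lt_div_iff₀ h2pos hDpos]
    have h1lt : Real.sqrt 2 * s < 1 := by nlinarith
    have hsqlt : D ^ 2 < (2 - Real.sqrt 2 * s) ^ 2 := by nlinarith [sq_nonneg (Real.sqrt 2 * s - 1)]
    nlinarith [sq_nonneg (D - (2 - Real.sqrt 2 * s))]
  have him : l3.im = (Real.sqrt 2 - s) / D := by
    rw [hl3]
    simp [Complex.div_ofReal_im]
    ring
  have hpos : 0 < (Real.sqrt 2 - s) / D := lt_trans (by positivity) hkey
  refine ⟨hkey, ?_, ?_⟩
  · rw [him, abs_of_pos hpos]; exact hkey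
  · rw [Complex.neg_im, abs_neg, him, abs_of_pos hpos]; exact hkey
end

section
/- Let σ₊, σ₋ ∈ ℝ and set σ̃ = (σ₊ + σ₋)/2, q = e^{−2iσ₋} + e^{−2iσ₊} − 6e^{−2iσ̃}, and r⁻ = e^{−iσ₊} − e^{−iσ₋}. Then q ≠ 0, and for every complex number w with w² = q one has −r⁻ − w ≠ 0 and −r⁻ + w ≠ 0; i.e., the denominators in the eigenvalue formulas for the complete two-phase quantum walk never vanish. -/
open Real Complex

/-- For `σ₊, σ₋ ∈ ℝ` with `σ̃ = (σ₊ + σ₋)/2`,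
`q = e^{-2iσ₋} + e^{-2iσ₊} - 6e^{-2iσ̃}` and `r⁻ = e^{-iσ₊} - e^{-iσ₋}`, one
has `q ≠ 0` and, for every square root `w` of `q`, `-r⁻ - w ≠ 0` and
`-r⁻ + w ≠ 0`: the denominators in the eigenvalue formulas for the complete
two-phase quantum walk never vanish. -/
theorem stmt_14 (σp σm : ℝ) (σt : ℝ) (hσt : σt = (σp + σm) / 2)
    (q rm : ℂ)
    (hq : q = Complex.exp (-2 * Complex.I * (σm : ℂ)) +
      Complex.exp (-2 * Complex.I * (σp : ℂ)) -
      6 * Complex.exp (-2 * Complex.I * (σt : ℂ)))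
    (hrm : rm = Complex.exp (-Complex.I * (σp : ℂ)) -
      Complex.exp (-Complex.I * (σm : ℂ))) :
    q ≠ 0 ∧ ∀ w : ℂ, w ^ 2 = q → -rm - w ≠ 0 ∧ -rm + w ≠ 0 := by
  set a : ℂ := Complex.exp (-Complex.I * (σp : ℂ)) with ha
  set b : ℂ := Complex.exp (-Complex.I * (σm : ℂ)) with hb
  have ha2 : Complex.exp (-2 * Complex.I * (σp : ℂ)) = a ^ 2 := by
    rw [ha, ← Complex.exp_nat_mul]; ring_nf
  have hb2 : Complex.exp (-2 * Complex.I * (σm : ℂ)) = b ^ 2 := by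
    rw [hb, ← Complex.exp_nat_mul]; ring_nf
  have hab : Complex.exp (-2 * Complex.I * (σt : ℂ)) = a * b := by
    rw [ha, hb, ← Complex.exp_add, hσt]
    push_cast
    ring_nf
  have hqab : q = a ^ 2 + b ^ 2 - 6 * (a * b) := by
    rw [hq, ha2, hb2, hab]; ring
  have habs_a : ‖a‖ = 1 := by
    rw [ha, Complex.norm_exp]
    simp
  have habs_b : ‖b‖ = 1 := by
    rw [hb, Complex.norm_exp]
    simp
  have hane : a ≠ 0 := Complex.exp_ne_zero _
  have hbne : b ≠ 0 := Complex.exp_ne_zero _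
  have hqne : q ≠ 0 := by
    intro h
    have h6 : a ^ 2 + b ^ 2 = 6 * (a * b) := by
      rw [hqab] at h; linear_combination h
    have h1 : ‖a ^ 2 + b ^ 2‖ ≤ 2 := by
      calc ‖a ^ 2 + b ^ 2‖ ≤ ‖a ^ 2‖ + ‖b ^ 2‖ :=
            norm_add_le _ _
        _ = 2 := by rw [norm_pow, norm_pow, habs_a, habs_b]; norm_num
    have h2 : ‖6 * (a * b)‖ = 6 := by
      rw [norm_mul, norm_mul, habs_a, habs_b]; norm_num
    rw [h6, h2] at h1
    norm_num at h1
  refine ⟨hqne, fun w hw => ⟨?_, ?_⟩⟩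
  · intro h
    have hwrm : w = -rm := by linear_combination -h
    have : (a - b) ^ 2 = q := by
      rw [← hw, hwrm, hrm]; ring
    rw [hqab] at this
    have : a * b = 0 := by linear_combination this / 4
    exact hane (by simpa [hbne] using this)
  · intro h
    have hwrm : w = rm := by linear_combination h
    have : (a - b) ^ 2 = q := by
      rw [← hw, hwrm, hrm]
    rw [hqab] at this
    have : a * b = 0 := by linear_combination this / 4
    exact hane (by simpa [hbne] using this)
end

section
/- Let σ₊, σ₋ ∈ ℝ and set σ̃ = (σ₊ + σ₋)/2, p = e^{iσ₊}(e^{−2iσ₋} − e^{−2iσ₊} − 4e^{−2iσ̃}), q = e^{−2iσ₋} + e^{−2iσ₊} − 6e^{−2iσ̃}, and r⁻ = e^{−iσ₊} − e^{−iσ₋}. Then for every complex number w with w² = q, the complex number μ = (p + e^{iσ₊} r⁻ w)/(2(−r⁻ − w)) satisfies |μ| = 1. (Taking both choices of square root w of q, this shows that the squares of all four eigenvalues λ^(1), λ^(2), λ^(3), λ^(4) of the complete two-phase quantum walk lie on the unit circle, hence the eigenvalues themselves lie on S¹.) -/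
open Real Complex

/-- For `σ₊, σ₋ ∈ ℝ` with `σ̃ = (σ₊ + σ₋)/2`,
`p = e^{iσ₊}(e^{-2iσ₋} - e^{-2iσ₊} - 4e^{-2iσ̃})`,
`q = e^{-2iσ₋} + e^{-2iσ₊} - 6e^{-2iσ̃}`, `r⁻ = e^{-iσ₊} - e^{-iσ₋}`, and any
square root `w` of `q`, the squared eigenvalue
`μ = (p + e^{iσ₊} r⁻ w)/(2(-r⁻ - w))` of the complete two-phase quantum walk
lies on the unit circle. -/
theorem stmt_15 (σp σm : ℝ) (σt : ℝ) (hσt : σt = (σp + σm) / 2)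
    (p q rm : ℂ)
    (hp : p = Complex.exp (Complex.I * (σp : ℂ)) *
      (Complex.exp (-2 * Complex.I * (σm : ℂ)) -
       Complex.exp (-2 * Complex.I * (σp : ℂ)) -
       4 * Complex.exp (-2 * Complex.I * (σt : ℂ))))
    (hq : q = Complex.exp (-2 * Complex.I * (σm : ℂ)) +
      Complex.exp (-2 * Complex.I * (σp : ℂ)) -
      6 * Complex.exp (-2 * Complex.I * (σt : ℂ)))
    (hrm : rm = Complex.exp (-Complex.I * (σp : ℂ)) -
      Complex.exp (-Complex.I * (σm : ℂ))) :
    ∀ w : ℂ, w ^ 2 = q →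
      ‖(p + Complex.exp (Complex.I * (σp : ℂ)) * rm * w) /
        (2 * (-rm - w))‖ = 1 := by
  intro w hw
  set A := Complex.exp (Complex.I * (σp : ℂ)) with hAdef
  set B := Complex.exp (Complex.I * (σm : ℂ)) with hBdef
  have hA : A ≠ 0 := Complex.exp_ne_zero _
  have hB : B ≠ 0 := Complex.exp_ne_zero _
  have haa : A * A⁻¹ = 1 := mul_inv_cancel₀ hA
  have hbb : B * B⁻¹ = 1 := mul_inv_cancel₀ hB
  have eA : Complex.exp (-Complex.I * (σp : ℂ)) = A⁻¹ := by
    rw [show -Complex.I * (σp : ℂ) = -(Complex.I * σp) by ring, Complex.exp_neg]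
  have eB : Complex.exp (-Complex.I * (σm : ℂ)) = B⁻¹ := by
    rw [show -Complex.I * (σm : ℂ) = -(Complex.I * σm) by ring, Complex.exp_neg]
  have e2A : Complex.exp (-2 * Complex.I * (σp : ℂ)) = A⁻¹ * A⁻¹ := by
    rw [show -2 * Complex.I * (σp : ℂ) = -(Complex.I * σp) + -(Complex.I * σp) by ring,
      Complex.exp_add, Complex.exp_neg]
  have e2B : Complex.exp (-2 * Complex.I * (σm : ℂ)) = B⁻¹ * B⁻¹ := by
    rw [show -2 * Complex.I * (σm : ℂ) = -(Complex.I * σm) + -(Complex.I * σm) by ring,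
      Complex.exp_add, Complex.exp_neg]
  have e2T : Complex.exp (-2 * Complex.I * (σt : ℂ)) = A⁻¹ * B⁻¹ := by
    rw [show -2 * Complex.I * (σt : ℂ) = -(Complex.I * σp) + -(Complex.I * σm) by
        rw [hσt]; push_cast; ring,
      Complex.exp_add, Complex.exp_neg, Complex.exp_neg]
  rw [e2A, e2B, e2T] at hp hq
  rw [eA, eB] at hrm
  rw [hq] at hw
  have hcA : (starRingEnd ℂ) A = A⁻¹ := by
    rw [hAdef, ← Complex.exp_conj, ← Complex.exp_neg]
    congr 1
    simp [Complex.conj_ofReal]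
  have hcB : (starRingEnd ℂ) B = B⁻¹ := by
    rw [hBdef, ← Complex.exp_conj, ← Complex.exp_neg]
    congr 1
    simp [Complex.conj_ofReal]
  have habsA : ‖A‖ = 1 := by
    rw [hAdef, Complex.norm_exp]; simp
  have habsB : ‖B‖ = 1 := by
    rw [hBdef, Complex.norm_exp]; simp
  have h1 : ((starRingEnd ℂ) w) ^ 2 = B * B + A * A - 6 * (A * B) := by
    have := congrArg (starRingEnd ℂ) hw
    simpa only [map_pow, map_add, map_sub, map_mul, map_inv₀, map_ofNat, hcA, hcB,
      inv_inv] using this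
  have h2 : (A * B * w) ^ 2 = B * B + A * A - 6 * (A * B) := by
    linear_combination (A*B)^2 * hw + (B^2*(A*A⁻¹+1) - 6*A*B*B*B⁻¹) * haa
      + (A^2*(B*B⁻¹+1) - 6*A*B) * hbb
  have hsq : ((starRingEnd ℂ) w - A * B * w) * ((starRingEnd ℂ) w + A * B * w) = 0 := by
    linear_combination h1 - h2
  rcases mul_eq_zero.1 hsq with hcase | hcw
  · exfalso
    have hcw' : (starRingEnd ℂ) w = A * B * w := by linear_combination hcase
    have hns : ((Complex.normSq w : ℝ) : ℂ) = A⁻¹ * B + A * B⁻¹ - 6 := by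
      rw [← Complex.mul_conj, hcw']
      linear_combination (A*B) * hw + (A⁻¹*B - 6*B*B⁻¹) * haa + (A*B⁻¹ - 6) * hbb
    have hz : A * B⁻¹ = (starRingEnd ℂ) (A⁻¹ * B) := by
      rw [map_mul, map_inv₀, hcA, hcB, inv_inv]
    rw [hz, Complex.add_conj] at hns
    have hre : Complex.normSq w = 2 * (A⁻¹ * B).re - 6 := by
      exact_mod_cast hns
    have hle : (A⁻¹ * B).re ≤ 1 := by
      have h := Complex.re_le_norm (A⁻¹ * B)
      rwa [norm_mul, norm_inv, habsA, habsB, inv_one, one_mul] at h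
    nlinarith [Complex.normSq_nonneg w]
  · have hcw' : (starRingEnd ℂ) w = -(A * B * w) := by linear_combination hcw
    have hD : (2 : ℂ) * (-rm - w) ≠ 0 := by
      intro h0
      have hwv : w = -rm := by linear_combination (-1/2 : ℂ) * h0
      rw [hwv, hrm] at hw
      have h4 : (4 : ℂ) * (A⁻¹ * B⁻¹) = 0 := by linear_combination hw
      simp [hA, hB] at h4
    set N := p + A * rm * w with hN
    set D := (2 : ℂ) * (-rm - w) with hDdef
    have key : N * (starRingEnd ℂ) N = D * (starRingEnd ℂ) D := by
      rw [hN, hDdef, hp, hrm]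
      simp only [map_add, map_sub, map_mul, map_neg, map_inv₀, map_ofNat, hcA, hcB, hcw',
        inv_inv]
      linear_combination
        (4*A*B - A⁻¹*B⁻¹*A^2*B^2 + A⁻¹*B⁻¹*A^3*B + A⁻¹^2*A^2*B^2 - A⁻¹^2*A^3*B) * hw
        + (-3 - B⁻¹*B + 4*B⁻¹*A + 8*B⁻¹^2*B^2 - 11*B⁻¹^2*A*B - B⁻¹^2*A^2 - B⁻¹^3*A*B^2
          + B⁻¹^3*A^2*B + 7*A⁻¹*B + A⁻¹*A - 11*A⁻¹*B⁻¹*B^2 + 23*A⁻¹*B⁻¹*A*B + 4*A⁻¹*B⁻¹*A^2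
          + 7*A⁻¹*B⁻¹^2*A*B^2 - 7*A⁻¹*B⁻¹^2*A^2*B + 3*A⁻¹^2*A*B + A⁻¹^2*A^2
          - 7*A⁻¹^2*B⁻¹*A*B^2 + 7*A⁻¹^2*B⁻¹*A^2*B + A⁻¹^3*A*B^2 - A⁻¹^3*A^2*B + w*B - w*A
          - 5*w*B⁻¹*B^2 + 8*w*B⁻¹*A*B + w*B⁻¹*A^2 + w*B⁻¹^2*A*B^2 - w*B⁻¹^2*A^2*B
          - 3*w*A⁻¹*A*B - w*A⁻¹*A^2 - 4*w*A⁻¹*B⁻¹*A*B^2 + 4*w*A⁻¹*B⁻¹*A^2*B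
          - w*A⁻¹^2*A*B^2 + w*A⁻¹^2*A^2*B) * haa
        + (3 + 8*B⁻¹*B - 8*B⁻¹*A - B⁻¹^2*A*B + B⁻¹^2*A^2 - 11*A⁻¹*B - 5*w*B + 5*w*A
          + w*B⁻¹*A*B - w*B⁻¹*A^2) * hbb
    have hnsq : Complex.normSq N = Complex.normSq D := by
      have h : ((Complex.normSq N : ℝ) : ℂ) = ((Complex.normSq D : ℝ) : ℂ) := by
        rw [← Complex.mul_conj, ← Complex.mul_conj]; exact key
      exact_mod_cast h
    have habs : ‖N‖ = ‖D‖ := by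
      rw [Complex.norm_def, Complex.norm_def, hnsq]
    rw [norm_div, habs, div_self]
    exact norm_ne_zero_iff.mpr hD
end
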